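/- Let X be a compact connected metric space, let μ be a faithful Borel probability measure on X, and let (μ_k) be a sequence of faithful Borel probability measures on X. Then ∫ f dμ_k → ∫ f dμ for every continuous function f : X → ℝ if and only if W_∞(μ_k, μ) → 0. -/

import Mathlib

open MeasureTheory Filter

/-- The ∞-Wasserstein distance between two Borel measures on a metric space:
`W_∞(μ, ν) = inf { r > 0 : μ(U) ≤ ν(U_r) and ν(U) ≤ μ(U_r) for every open U }`,
where `U_r` is the open `r`-neighbourhood of `U`. -/
noncomputable def infWasserstein {X : Type*} [MetricSpace X] [MeasurableSpace X]
    (μ ν : Measure X) : ℝ :=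
  sInf { r : ℝ | 0 < r ∧ ∀ U : Set X, IsOpen U →
    μ U ≤ ν (Metric.thickening r U) ∧ ν U ≤ μ (Metric.thickening r U) }

/-- The radius `diam X + 1` always belongs to the defining set of `W_∞`, for
probability measures on a nonempty compact metric space. -/
lemma wSet_big_radius_mem {X : Type*} [MetricSpace X] [CompactSpace X] [Nonempty X]
    [MeasurableSpace X] (μ ν : Measure X) [IsProbabilityMeasure μ] [IsProbabilityMeasure ν] :
    (Metric.diam (Set.univ : Set X) + 1) ∈ { r : ℝ | 0 < r ∧ ∀ U : Set X, IsOpen U →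
      μ U ≤ ν (Metric.thickening r U) ∧ ν U ≤ μ (Metric.thickening r U) } := by
  have hd : 0 ≤ Metric.diam (Set.univ : Set X) := Metric.diam_nonneg
  refine ⟨by linarith, fun U hU => ?_⟩
  rcases U.eq_empty_or_nonempty with rfl | hne
  · simp [Metric.thickening_empty]
  · have hthick : Metric.thickening (Metric.diam (Set.univ : Set X) + 1) U = Set.univ := by
      apply Set.eq_univ_of_forall
      intro x
      obtain ⟨u, hu⟩ := hne
      refine Metric.mem_thickening_iff.2 ⟨u, hu, ?_⟩
      have := Metric.dist_le_diam_of_mem isCompact_univ.isBounded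
        (Set.mem_univ x) (Set.mem_univ u)
      linarith
    rw [hthick]
    simp only [measure_univ]
    exact ⟨prob_le_one, prob_le_one⟩

/-- Key eventual statement in the hard direction: given weak-* convergence, for every `ε > 0`,
eventually `ε` belongs to the defining set of `W_∞(μs k, μ)`. -/
lemma eventually_mem_wSet
    {X : Type*} [MetricSpace X] [CompactSpace X] [ConnectedSpace X]
    [MeasurableSpace X] [BorelSpace X]
    {μ : Measure X} [IsProbabilityMeasure μ]
    (hμfaithful : ∀ U : Set X, IsOpen U → U.Nonempty → 0 < μ U)
    {μs : ℕ → Measure X} (hprob : ∀ k, IsProbabilityMeasure (μs k))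
    (hclosed : ∀ F : Set X, IsClosed F → atTop.limsup (fun k => μs k F) ≤ μ F)
    (hopen : ∀ G : Set X, IsOpen G → μ G ≤ atTop.liminf (fun k => μs k G))
    {ε : ℝ} (hε : 0 < ε) :
    ∀ᶠ k in atTop, ε ∈ { r : ℝ | 0 < r ∧ ∀ U : Set X, IsOpen U →
      (μs k) U ≤ μ (Metric.thickening r U) ∧ μ U ≤ (μs k) (Metric.thickening r U) } := by
  classical
  -- finite cover by balls of radius ε/8
  obtain ⟨t, ht⟩ := isCompact_univ.elim_finite_subcover
    (fun x : X => Metric.ball x (ε/8)) (fun _ => Metric.isOpen_ball)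
    (fun x _ => Set.mem_iUnion.2 ⟨x, Metric.mem_ball_self (by positivity)⟩)
  set V : Finset X → Set X := fun S => ⋃ x ∈ S, Metric.ball x (ε/8) with hV
  -- the key eventual condition for each subset of the net
  have key : ∀ S ∈ (↑t.powerset : Set (Finset X)), ∀ᶠ k in atTop,
      (((V S).Nonempty ∧ Metric.thickening (ε/2) (V S) ≠ Set.univ) →
        (μs k (closure (V S)) < μ (Metric.thickening (ε/2) (V S)) ∧
          μ (V S) < μs k (Metric.thickening (3*ε/8) (V S)))) := by
    intro S _
    by_cases hgood : (V S).Nonempty ∧ Metric.thickening (ε/2) (V S) ≠ Set.univ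
    swap
    · exact Eventually.of_forall (fun k h => absurd h hgood)
    obtain ⟨hVne, hth⟩ := hgood
    -- find a point of the "shell"
    obtain ⟨x1, hx1⟩ : ∃ x1, x1 ∉ Metric.thickening (ε/2) (V S) := by
      by_contra hcon; push_neg at hcon
      exact hth (Set.eq_univ_of_forall hcon)
    obtain ⟨x0, hx0⟩ := hVne
    have hd1 : ε/2 ≤ Metric.infDist x1 (V S) := by
      by_contra hcon; push_neg at hcon
      exact hx1 ((Metric.mem_thickening_iff_infDist_lt ⟨x0, hx0⟩).2 hcon)
    obtain ⟨z, hz⟩ : ∃ z, Metric.infDist z (V S) = ε/4 := by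
      have hivt := intermediate_value_univ x0 x1 (Metric.continuous_infDist_pt (V S))
      have h04 : (ε/4) ∈ Set.Icc (Metric.infDist x0 (V S)) (Metric.infDist x1 (V S)) := by
        rw [Metric.infDist_zero_of_mem hx0]
        exact ⟨by positivity, by linarith⟩
      exact hivt h04
    set shell : Set X :=
      Metric.thickening (3*ε/8) (V S) \ Metric.cthickening (ε/8) (V S) with hshell
    have hshell_open : IsOpen shell :=
      Metric.isOpen_thickening.sdiff Metric.isClosed_cthickening
    have hz_mem : z ∈ shell := by
      constructor
      · exact (Metric.mem_thickening_iff_infDist_lt ⟨x0, hx0⟩).2 (by rw [hz]; linarith)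
      · intro hmem
        have h1 : EMetric.infEdist z (V S) ≤ ENNReal.ofReal (ε/8) :=
          Metric.mem_cthickening_iff.1 hmem
        have h2 : Metric.infDist z (V S) ≤ ε/8 := by
          have := ENNReal.toReal_mono ENNReal.ofReal_ne_top h1
          rwa [ENNReal.toReal_ofReal (by positivity : (0:ℝ) ≤ ε/8)] at this
        rw [hz] at h2; linarith
    have hδ : 0 < μ shell := hμfaithful _ hshell_open ⟨z, hz_mem⟩
    -- first eventual condition, from limsup over closed sets
    have hclosed_sub : closure (V S) ∪ shell ⊆ Metric.thickening (ε/2) (V S) := by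
      apply Set.union_subset
      · exact (Metric.closure_subset_cthickening (ε/8) _).trans
          (Metric.cthickening_subset_thickening' (by linarith) (by linarith) _)
      · exact Set.diff_subset.trans (Metric.thickening_mono (by linarith) _)
    have hdisj1 : Disjoint (closure (V S)) shell :=
      Set.disjoint_left.2 fun x hx hx' => hx'.2 (Metric.closure_subset_cthickening _ _ hx)
    have h1 : μ (closure (V S)) < μ (Metric.thickening (ε/2) (V S)) :=
      calc μ (closure (V S)) < μ (closure (V S)) + μ shell :=
            ENNReal.lt_add_right (measure_ne_top μ _) hδ.ne'
        _ = μ (closure (V S) ∪ shell) :=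
            (measure_union hdisj1 hshell_open.measurableSet).symm
        _ ≤ _ := measure_mono hclosed_sub
    have hls := hclosed (closure (V S)) isClosed_closure
    have e1 : ∀ᶠ k in atTop, μs k (closure (V S)) < μ (Metric.thickening (ε/2) (V S)) :=
      eventually_lt_of_limsup_lt (lt_of_le_of_lt hls h1)
    -- second eventual condition, from liminf over open sets
    have hopen_sub : V S ∪ shell ⊆ Metric.thickening (3*ε/8) (V S) := by
      apply Set.union_subset
      · exact Metric.self_subset_thickening (by linarith) _
      · exact Set.diff_subset
    have hdisj2 : Disjoint (V S) shell :=
      Set.disjoint_left.2 fun x hx hx' => hx'.2 (Metric.self_subset_cthickening _ hx)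
    have h2 : μ (V S) < μ (Metric.thickening (3*ε/8) (V S)) :=
      calc μ (V S) < μ (V S) + μ shell :=
            ENNReal.lt_add_right (measure_ne_top μ _) hδ.ne'
        _ = μ (V S ∪ shell) := (measure_union hdisj2 hshell_open.measurableSet).symm
        _ ≤ _ := measure_mono hopen_sub
    have hli := hopen (Metric.thickening (3*ε/8) (V S)) Metric.isOpen_thickening
    have e2 : ∀ᶠ k in atTop, μ (V S) < μs k (Metric.thickening (3*ε/8) (V S)) :=
      eventually_lt_of_lt_liminf (lt_of_lt_of_le h2 hli)
    exact (e1.and e2).mono (fun k hk _ => hk)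
  have hall := (eventually_all_finite (t.powerset : Finset (Finset X)).finite_toSet).2 key
  filter_upwards [hall] with k hk
  refine ⟨hε, fun U hU => ?_⟩
  rcases U.eq_empty_or_nonempty with rfl | hUne
  · simp [Metric.thickening_empty]
  haveI := hprob k
  set S : Finset X := t.filter (fun x => (Metric.ball x (ε/8) ∩ U).Nonempty) with hS
  have hSmem : S ∈ (↑t.powerset : Set (Finset X)) := by
    simp only [Finset.coe_powerset, Set.mem_preimage, Set.mem_powerset_iff, Finset.coe_subset]
    exact Finset.filter_subset _ _
  have hUV : U ⊆ V S := by
    intro x hx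
    have hcov := ht (Set.mem_univ x)
    rw [Set.mem_iUnion₂] at hcov
    obtain ⟨y, hyt, hxy⟩ := hcov
    exact Set.mem_biUnion (Finset.mem_filter.2 ⟨hyt, ⟨x, hxy, hx⟩⟩) hxy
  have hVU : V S ⊆ Metric.thickening (ε/4) U := by
    intro w hw
    rw [hV, Set.mem_iUnion₂] at hw
    obtain ⟨y, hyS, hwy⟩ := hw
    obtain ⟨u, hu_ball, huU⟩ := (Finset.mem_filter.1 hyS).2
    refine Metric.mem_thickening_iff.2 ⟨u, huU, ?_⟩
    have h1 : dist w y < ε/8 := Metric.mem_ball.1 hwy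
    have h2 : dist u y < ε/8 := Metric.mem_ball.1 hu_ball
    calc dist w u ≤ dist w y + dist u y := dist_triangle_right _ _ _
      _ < ε/4 := by linarith
  have hth1 : Metric.thickening (ε/2) (V S) ⊆ Metric.thickening ε U :=
    (Metric.thickening_subset_of_subset _ hVU).trans
      ((Metric.thickening_thickening_subset _ _ _).trans
        (Metric.thickening_mono (by linarith) _))
  have hth2 : Metric.thickening (3*ε/8) (V S) ⊆ Metric.thickening ε U :=
    (Metric.thickening_subset_of_subset _ hVU).trans
      ((Metric.thickening_thickening_subset _ _ _).trans
        (Metric.thickening_mono (by linarith) _))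
  have hVSne : (V S).Nonempty := hUne.mono hUV
  by_cases hXc : Metric.thickening (ε/2) (V S) = Set.univ
  · have huniv : Metric.thickening ε U = Set.univ :=
      Set.eq_univ_of_univ_subset (hXc ▸ hth1)
    rw [huniv]
    simp only [measure_univ]
    exact ⟨prob_le_one, prob_le_one⟩
  · obtain ⟨c1, c2⟩ := hk S hSmem ⟨hVSne, hXc⟩
    constructor
    · exact le_trans (measure_mono (hUV.trans subset_closure))
        (le_trans c1.le (measure_mono hth1))
    · exact le_trans (measure_mono hUV) (le_trans c2.le (measure_mono hth2))

/-- On a compact connected metric space, `W_∞` metrises the weak-* topology on the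
faithful Borel probability measures: a sequence of faithful probability measures
converges weak-* to a faithful probability measure `μ` iff it converges in `W_∞`. -/
theorem weakstar_tendsto_iff_infWasserstein_tendsto
    (X : Type*) [MetricSpace X] [CompactSpace X] [ConnectedSpace X]
    [MeasurableSpace X] [BorelSpace X]
    (μ : Measure X) [IsProbabilityMeasure μ]
    (hμfaithful : ∀ U : Set X, IsOpen U → U.Nonempty → 0 < μ U)
    (μs : ℕ → Measure X) (hprob : ∀ k, IsProbabilityMeasure (μs k))
    (hfaithful : ∀ k, ∀ U : Set X, IsOpen U → U.Nonempty → 0 < (μs k) U) :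
    (∀ f : X → ℝ, Continuous f →
        Tendsto (fun k => ∫ x, f x ∂(μs k)) atTop (nhds (∫ x, f x ∂μ))) ↔
      Tendsto (fun k => infWasserstein (μs k) μ) atTop (nhds 0) := by
  set P : ℕ → ProbabilityMeasure X := fun k => ⟨μs k, hprob k⟩ with hPdef
  set Pμ : ProbabilityMeasure X := ⟨μ, inferInstance⟩ with hPμdef
  constructor
  · -- weak-* convergence implies W_∞ convergence
    intro h
    have hP : Tendsto P atTop (nhds Pμ) := by
      rw [ProbabilityMeasure.tendsto_iff_forall_integral_tendsto]
      intro f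
      exact h f f.continuous
    rw [NormedAddCommGroup.tendsto_nhds_zero]
    intro ε hε
    have hclosed : ∀ F : Set X, IsClosed F → atTop.limsup (fun k => μs k F) ≤ μ F :=
      fun F hF => ProbabilityMeasure.limsup_measure_closed_le_of_tendsto hP hF
    have hopen : ∀ G : Set X, IsOpen G → μ G ≤ atTop.liminf (fun k => μs k G) :=
      fun G hG => ProbabilityMeasure.le_liminf_measure_open_of_tendsto hP hG
    have hev := eventually_mem_wSet hμfaithful hprob hclosed hopen (half_pos hε)
    filter_upwards [hev] with k hk
    have hnn : 0 ≤ infWasserstein (μs k) μ :=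
      Real.sInf_nonneg (fun r hr => hr.1.le)
    have hle : infWasserstein (μs k) μ ≤ ε/2 :=
      csInf_le ⟨0, fun r hr => hr.1.le⟩ hk
    rw [Real.norm_eq_abs, abs_of_nonneg hnn]
    linarith
  · -- W_∞ convergence implies weak-* convergence
    intro h f hf
    have key : ∀ G : Set X, IsOpen G → Pμ G ≤ atTop.liminf (fun k => P k G) := by
      intro G hG
      -- the ℝ≥0∞ version
      have hEN : μ G ≤ atTop.liminf (fun k => μs k G) := by
        set U : ℕ → Set X := fun n => (Metric.cthickening ((1:ℝ)/(n+1)) Gᶜ)ᶜ with hU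
        have hUopen : ∀ n, IsOpen (U n) := fun n =>
          Metric.isClosed_cthickening.isOpen_compl
        have hUsub : ∀ (n : ℕ) (r : ℝ), r < 1/(n+1) →
            Metric.thickening r (U n) ⊆ G := by
          intro n r hrlt x hx
          obtain ⟨y, hyU, hxy⟩ := Metric.mem_thickening_iff.1 hx
          by_contra hxG
          apply hyU
          refine Metric.mem_cthickening_iff.2 ?_
          calc EMetric.infEdist y Gᶜ ≤ edist y x :=
                EMetric.infEdist_le_edist_of_mem hxG
            _ = ENNReal.ofReal (dist x y) := by rw [edist_dist, dist_comm]
            _ ≤ ENNReal.ofReal ((1:ℝ)/(n+1)) := ENNReal.ofReal_le_ofReal (by linarith)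
        have hmono : Monotone U := by
          intro n m hnm
          apply Set.compl_subset_compl.2
          apply Metric.cthickening_mono
          have h1 : (0:ℝ) < n + 1 := by positivity
          have h2 : (n:ℝ) + 1 ≤ (m:ℝ) + 1 := by
            have := (Nat.cast_le (α := ℝ)).2 hnm; linarith
          exact one_div_le_one_div_of_le h1 h2
        have hUG : (⋃ n, U n) = G := by
          apply Set.Subset.antisymm
          · intro x hx
            obtain ⟨n, hn⟩ := Set.mem_iUnion.1 hx
            by_contra hxG
            exact hn (Metric.self_subset_cthickening _ hxG)
          · intro x hx
            rcases (Gᶜ).eq_empty_or_nonempty with hGc | hGc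
            · exact Set.mem_iUnion.2 ⟨0, by simp [hU, hGc, Metric.cthickening_empty]⟩
            · have hxpos : 0 < Metric.infDist x Gᶜ :=
                (hG.isClosed_compl.notMem_iff_infDist_pos hGc).1 (by simpa using hx)
              obtain ⟨n, hn⟩ := exists_nat_one_div_lt hxpos
              refine Set.mem_iUnion.2 ⟨n, fun hmem => ?_⟩
              have h1 : EMetric.infEdist x Gᶜ ≤ ENNReal.ofReal ((1:ℝ)/(n+1)) :=
                Metric.mem_cthickening_iff.1 hmem
              have h2 : Metric.infDist x Gᶜ ≤ (1:ℝ)/(n+1) := by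
                have := ENNReal.toReal_mono ENNReal.ofReal_ne_top h1
                rwa [ENNReal.toReal_ofReal (by positivity : (0:ℝ) ≤ 1/(n+1))] at this
              have hn' : (1:ℝ)/(n+1) < Metric.infDist x Gᶜ := by exact_mod_cast hn
              linarith
        have hlim : ∀ n, μ (U n) ≤ atTop.liminf (fun k => μs k G) := by
          intro n
          have hδpos : (0:ℝ) < 1/(n+1) := by positivity
          have hev : ∀ᶠ k in atTop, μ (U n) ≤ μs k G := by
            filter_upwards [h.eventually (gt_mem_nhds hδpos)] with k hk
            haveI := hprob k
            have hne : Set.Nonempty { r : ℝ | 0 < r ∧ ∀ W : Set X, IsOpen W →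
                (μs k) W ≤ μ (Metric.thickening r W) ∧
                  μ W ≤ (μs k) (Metric.thickening r W) } :=
              ⟨_, wSet_big_radius_mem (μs k) μ⟩
            obtain ⟨r, hrmem, hrlt⟩ := exists_lt_of_csInf_lt hne hk
            exact (hrmem.2 (U n) (hUopen n)).2.trans (measure_mono (hUsub n r hrlt))
          exact le_liminf_of_le (by isBoundedDefault) hev
        have htend := tendsto_measure_iUnion_atTop (μ := μ) hmono
        rw [hUG] at htend
        exact le_of_tendsto' htend hlim
      have aux : (↑(atTop.liminf (fun k => P k G)) : ENNReal) =
          atTop.liminf (fun k => ((P k G : NNReal) : ENNReal)) := by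
        refine Monotone.map_liminf_of_continuousAt (F := atTop) ENNReal.coe_mono
          (fun k => P k G) ENNReal.continuous_coe.continuousAt ?_ ?_
        · exact IsBoundedUnder.isCoboundedUnder_ge ⟨1, by simp⟩
        · exact ⟨0, by simp⟩
      rw [← ENNReal.coe_le_coe, aux, ProbabilityMeasure.ennreal_coeFn_eq_coeFn_toMeasure]
      have hcoe : ∀ k, ((P k G : NNReal) : ENNReal) = μs k G := fun k =>
        ProbabilityMeasure.ennreal_coeFn_eq_coeFn_toMeasure _ _
      simp only [hcoe]
      exact hEN
    have hPt := tendsto_of_forall_isOpen_le_liminf key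
    have hint := ProbabilityMeasure.tendsto_iff_forall_integral_tendsto.1 hPt
      (BoundedContinuousFunction.mkOfCompact ⟨f, hf⟩)
    exact hint
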